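/- For every real x > 0 and every real c > 1, the inverse Mellin integral (1/(2π)) ∫_{−∞}^{∞} Γ(c + it) · ζ(c + it) · x^{−(c+it)} dt converges absolutely and equals 1/(e^x − 1), where Γ is the complex Gamma function and ζ is the Riemann zeta function. -/

import Mathlib

open MeasureTheory Complex Filter

namespace Stmt7Aux

open Set

/-- The function whose Mellin transform is Γ·ζ. -/
noncomputable def f (y : ℝ) : ℂ := 1 / ((Real.exp y : ℂ) - 1)

lemma norm_Gamma_le {s : ℂ} (hs : 0 < s.re) : ‖Complex.Gamma s‖ ≤ Real.Gamma s.re := by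
  rw [Complex.Gamma_eq_integral hs, Real.Gamma_eq_integral hs, Complex.GammaIntegral]
  refine (norm_integral_le_integral_norm _).trans_eq ?_
  refine setIntegral_congr_fun measurableSet_Ioi fun t ht => ?_
  rw [norm_mul, Complex.norm_real, Real.norm_eq_abs, abs_of_pos (Real.exp_pos _),
    Complex.norm_cpow_eq_rpow_re_of_pos ht, Complex.sub_re, Complex.one_re]

lemma summable_aux {c : ℝ} (hc : 1 < c) : Summable fun n : ℕ => 1 / ((n : ℝ) + 1) ^ c := by
  have h := (summable_nat_add_iff 1).mpr (Real.summable_one_div_nat_rpow.mpr hc)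
  refine h.congr fun n => ?_
  push_cast
  ring_nf

lemma norm_zeta_le {c : ℝ} (hc : 1 < c) (t : ℝ) :
    ‖riemannZeta ((c : ℂ) + (t : ℂ) * I)‖ ≤ ∑' n : ℕ, 1 / ((n : ℝ) + 1) ^ c := by
  have hre : ((c : ℂ) + (t : ℂ) * I).re = c := by simp
  have hs : 1 < ((c : ℂ) + (t : ℂ) * I).re := by rw [hre]; exact hc
  rw [zeta_eq_tsum_one_div_nat_add_one_cpow hs]
  have hnorm : ∀ n : ℕ, ‖1 / ((n : ℂ) + 1) ^ ((c : ℂ) + (t : ℂ) * I)‖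
      = 1 / ((n : ℝ) + 1) ^ c := by
    intro n
    have hpos : (0 : ℝ) < (n : ℝ) + 1 := by positivity
    rw [norm_div, norm_one]
    have : ((n : ℂ) + 1) = (((n : ℝ) + 1 : ℝ) : ℂ) := by push_cast; ring
    rw [this, Complex.norm_cpow_eq_rpow_re_of_pos hpos, hre]
  refine (norm_tsum_le_tsum_norm ?_).trans_eq ?_
  · exact (summable_aux hc).congr fun n => (hnorm n).symm
  · exact tsum_congr hnorm

lemma norm_Gamma_line_le {c : ℝ} (hc : 1 < c) (t : ℝ) :
    ‖Complex.Gamma ((c : ℂ) + (t : ℂ) * I)‖ ≤ Real.Gamma (c + 2) / (1 + t ^ 2) := by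
  set s : ℂ := (c : ℂ) + (t : ℂ) * I with hs_def
  have hre : s.re = c := by simp [hs_def]
  have him : s.im = t := by simp [hs_def]
  have hs0 : s ≠ 0 := fun h => by simp [h] at hre; linarith
  have hs1 : s + 1 ≠ 0 := fun h => by
    have : (s + 1).re = 0 := by rw [h]; simp
    rw [Complex.add_re, hre, Complex.one_re] at this; linarith
  have key : Complex.Gamma (s + 2) = (s + 1) * (s * Complex.Gamma s) := by
    have h1 : s + 2 = (s + 1) + 1 := by ring
    rw [h1, Complex.Gamma_add_one _ hs1, Complex.Gamma_add_one _ hs0]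
  have hnorm2 : ‖Complex.Gamma (s + 2)‖ ≤ Real.Gamma (c + 2) := by
    have : (s + 2).re = c + 2 := by rw [Complex.add_re, hre]; norm_num
    have := norm_Gamma_le (s := s + 2) (by rw [this]; linarith)
    rwa [‹(s + 2).re = c + 2›] at this
  have hlow : 1 + t ^ 2 ≤ ‖s + 1‖ * ‖s‖ := by
    have h1 : Real.sqrt (1 + t ^ 2) ≤ ‖s‖ := by
      rw [Complex.norm_def, Complex.normSq_apply, hre, him]
      apply Real.sqrt_le_sqrt; nlinarith
    have h2 : Real.sqrt (1 + t ^ 2) ≤ ‖s + 1‖ := by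
      rw [Complex.norm_def, Complex.normSq_apply, Complex.add_re,
        Complex.add_im, hre, him, Complex.one_re, Complex.one_im]
      apply Real.sqrt_le_sqrt; nlinarith
    calc 1 + t ^ 2 = Real.sqrt (1 + t ^ 2) * Real.sqrt (1 + t ^ 2) :=
          (Real.mul_self_sqrt (by positivity)).symm
      _ ≤ ‖s + 1‖ * ‖s‖ := mul_le_mul h2 h1 (Real.sqrt_nonneg _) (norm_nonneg _)
  have hΓ : ‖Complex.Gamma s‖ * (1 + t ^ 2) ≤ Real.Gamma (c + 2) := by
    calc ‖Complex.Gamma s‖ * (1 + t ^ 2) ≤ ‖Complex.Gamma s‖ * (‖s + 1‖ * ‖s‖) :=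
          mul_le_mul_of_nonneg_left hlow (norm_nonneg _)
      _ = ‖Complex.Gamma (s + 2)‖ := by rw [key]; simp [norm_mul]; ring
      _ ≤ Real.Gamma (c + 2) := hnorm2
  rw [le_div_iff₀ (by positivity)]
  exact hΓ

lemma cont_line (c : ℝ) : Continuous fun t : ℝ => (c : ℂ) + (t : ℂ) * I := by fun_prop

lemma cont_Gamma_line {c : ℝ} (hc : 1 < c) :
    Continuous fun t : ℝ => Complex.Gamma ((c : ℂ) + (t : ℂ) * I) := by
  rw [continuous_iff_continuousAt]
  intro t
  refine (Complex.differentiableAt_Gamma _ fun m => ?_).continuousAt.comp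
    (cont_line c).continuousAt
  intro h
  have : ((c : ℂ) + (t : ℂ) * I).re = c := by simp
  rw [h] at this
  simp at this
  have : (0:ℝ) ≤ m := m.cast_nonneg
  linarith [this]

lemma cont_zeta_line {c : ℝ} (hc : 1 < c) :
    Continuous fun t : ℝ => riemannZeta ((c : ℂ) + (t : ℂ) * I) := by
  rw [continuous_iff_continuousAt]
  intro t
  refine (differentiableAt_riemannZeta ?_).continuousAt.comp (cont_line c).continuousAt
  intro h
  have : ((c : ℂ) + (t : ℂ) * I).re = c := by simp
  rw [h] at this
  simp at this
  linarith

lemma key_integrable {c : ℝ} (hc : 1 < c) {h : ℝ → ℂ} (hcont : Continuous h) {B : ℝ}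
    (hB : ∀ t, ‖h t‖ ≤ B) :
    Integrable fun t : ℝ => Complex.Gamma ((c : ℂ) + (t : ℂ) * I) *
      riemannZeta ((c : ℂ) + (t : ℂ) * I) * h t := by
  set Z := ∑' n : ℕ, 1 / ((n : ℝ) + 1) ^ c with hZ
  have hZ0 : 0 ≤ Z := tsum_nonneg fun n => by positivity
  have hB0 : 0 ≤ B := le_trans (norm_nonneg _) (hB 0)
  refine Integrable.mono' ((integrable_inv_one_add_sq.const_mul (Real.Gamma (c + 2) * Z * B)))
    (((cont_Gamma_line hc).mul (cont_zeta_line hc)).mul hcont).aestronglyMeasurable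
    (Filter.Eventually.of_forall fun t => ?_)
  rw [norm_mul, norm_mul]
  calc ‖Complex.Gamma ((c : ℂ) + (t : ℂ) * I)‖ * ‖riemannZeta ((c : ℂ) + (t : ℂ) * I)‖ * ‖h t‖
      ≤ (Real.Gamma (c + 2) / (1 + t ^ 2)) * Z * B := by
        exact mul_le_mul (mul_le_mul (norm_Gamma_line_le hc t) (norm_zeta_le hc t)
          (norm_nonneg _) (by positivity)) (hB t) (norm_nonneg _) (by positivity)
    _ = Real.Gamma (c + 2) * Z * B * (1 + t ^ 2)⁻¹ := by ring

lemma hasSum_f_real {t : ℝ} (ht : 0 < t) :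
    HasSum (fun n : ℕ => Real.exp (-((n : ℝ) + 1) * t)) (1 / (Real.exp t - 1)) := by
  set r := Real.exp (-t) with hr
  have hr0 : 0 ≤ r := (Real.exp_pos _).le
  have hr1 : r < 1 := by
    rw [hr, Real.exp_lt_one_iff]; linarith
  have het : 1 < Real.exp t := by
    rw [show t = -(-t) by ring, Real.exp_neg, one_lt_inv_iff₀]
    exact ⟨Real.exp_pos _, hr1⟩
  have hgeo := (hasSum_geometric_of_lt_one hr0 hr1).mul_right r
  have hval : (1 - r)⁻¹ * r = 1 / (Real.exp t - 1) := by
    have he : Real.exp t * r = 1 := by rw [hr, ← Real.exp_add]; simp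
    rw [inv_mul_eq_div, div_eq_div_iff (by linarith) (by linarith)]
    nlinarith
  rw [hval] at hgeo
  refine hgeo.congr_fun fun n => ?_
  rw [← pow_succ, hr, ← Real.exp_nat_mul]
  congr 1
  push_cast
  ring

lemma hasSum_f {t : ℝ} (ht : 0 < t) :
    HasSum (fun n : ℕ => (1 : ℂ) * (Real.exp (-((n : ℝ) + 1) * t) : ℂ)) (f t) := by
  have h := Complex.hasSum_ofReal.mpr (hasSum_f_real ht)
  have hft : f t = ((1 / (Real.exp t - 1) : ℝ) : ℂ) := by
    rw [f]; push_cast; ring_nf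
  rw [hft]
  refine h.congr_fun fun n => ?_
  rw [one_mul]

lemma mellin_f {s : ℂ} (hs : 1 < s.re) : mellin f s = Complex.Gamma s * riemannZeta s := by
  have h := hasSum_mellin (ι := ℕ) (a := fun _ => (1 : ℂ)) (p := fun n => (n : ℝ) + 1) (F := f)
    (s := s) (fun i => Or.inr (by positivity)) (by linarith)
    (fun t ht => hasSum_f ht) ?_
  · rw [← h.tsum_eq]
    rw [zeta_eq_tsum_one_div_nat_add_one_cpow hs, ← tsum_mul_left]
    refine tsum_congr fun n => ?_
    push_cast
    rw [mul_one, mul_one_div]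
  · refine (summable_aux (by exact hs : 1 < s.re)).congr fun n => ?_
    simp

lemma denom_ne_zero {y : ℝ} (hy : 0 < y) : ((Real.exp y : ℂ) - 1) ≠ 0 := by
  rw [sub_ne_zero]
  intro h
  have h1 : Real.exp y = 1 := by exact_mod_cast h
  have h2 := Real.add_one_le_exp y
  linarith

lemma norm_f {y : ℝ} (hy : 0 < y) : ‖f y‖ = 1 / (Real.exp y - 1) := by
  have h1 : 1 < Real.exp y := by
    have := Real.add_one_le_exp y; linarith
  rw [f, show ((Real.exp y : ℂ) - 1) = ((Real.exp y - 1 : ℝ) : ℂ) by push_cast; ring,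
    norm_div, norm_one, Complex.norm_real, Real.norm_eq_abs, abs_of_pos (by linarith)]

lemma continuousOn_f : ContinuousOn f (Ioi 0) :=
  continuousOn_const.div (by fun_prop) fun y hy => denom_ne_zero hy

lemma mellinConv {c : ℝ} (hc : 1 < c) : MellinConvergent f c := by
  refine mellinConvergent_of_isBigO_rpow_exp (a := 1) one_pos
    (continuousOn_f.locallyIntegrableOn measurableSet_Ioi) ?_ (b := 1) ?_ ?_
  · rw [Asymptotics.isBigO_iff]
    refine ⟨2, ?_⟩
    filter_upwards [Filter.eventually_ge_atTop 1] with t ht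
    have h2 : (2 : ℝ) ≤ Real.exp t := by
      have := Real.add_one_le_exp 1
      have := Real.exp_le_exp.mpr ht
      linarith
    rw [norm_f (by linarith), Real.norm_eq_abs, abs_of_pos (Real.exp_pos _), neg_one_mul,
      Real.exp_neg]
    calc 1 / (Real.exp t - 1) ≤ 1 / (Real.exp t / 2) :=
          one_div_le_one_div_of_le (by linarith) (by linarith)
      _ = 2 * (Real.exp t)⁻¹ := by rw [one_div_div]; ring
  · rw [Asymptotics.isBigO_iff]
    refine ⟨1, ?_⟩
    filter_upwards [self_mem_nhdsWithin] with t (ht : 0 < t)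
    have hlow : t ≤ Real.exp t - 1 := by
      have := Real.add_one_le_exp t; linarith
    rw [norm_f ht, Real.norm_eq_abs, Real.rpow_neg_one, abs_of_pos (by positivity), one_mul,
      one_div]
    exact inv_anti₀ ht hlow
  · simpa using hc

lemma continuousAt_f {y : ℝ} (hy : 0 < y) : ContinuousAt f y :=
  ContinuousAt.div continuousAt_const (by fun_prop) (denom_ne_zero hy)

end Stmt7Aux

open Stmt7Aux in
/-- For `x > 0` and `c > 1`, the inverse Mellin integral
`(1/2π) ∫_ℝ Γ(c+it) ζ(c+it) x^{−(c+it)} dt` converges absolutely and equals `1/(e^x − 1)`. -/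
theorem stmt7 (x c : ℝ) (hx : 0 < x) (hc : 1 < c) :
    Integrable (fun t : ℝ =>
      Complex.Gamma ((c : ℂ) + (t : ℂ) * Complex.I) *
        riemannZeta ((c : ℂ) + (t : ℂ) * Complex.I) *
        (x : ℂ) ^ (-((c : ℂ) + (t : ℂ) * Complex.I))) ∧
    (1 / (2 * (Real.pi : ℂ))) *
        ∫ t : ℝ, Complex.Gamma ((c : ℂ) + (t : ℂ) * Complex.I) *
          riemannZeta ((c : ℂ) + (t : ℂ) * Complex.I) *
          (x : ℂ) ^ (-((c : ℂ) + (t : ℂ) * Complex.I))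
      = 1 / ((Real.exp x : ℂ) - 1) := by
  have hxC : (x : ℂ) ≠ 0 := Complex.ofReal_ne_zero.mpr hx.ne'
  have hline : ∀ t : ℝ, 1 < ((c : ℂ) + (t : ℂ) * Complex.I).re := fun t => by simp [hc]
  have hcont_h : Continuous fun t : ℝ => (x : ℂ) ^ (-((c : ℂ) + (t : ℂ) * Complex.I)) :=
    Continuous.const_cpow (by fun_prop) (Or.inl hxC)
  have hB : ∀ t : ℝ, ‖(x : ℂ) ^ (-((c : ℂ) + (t : ℂ) * Complex.I))‖ ≤ x ^ (-c : ℝ) := by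
    intro t
    rw [Complex.norm_cpow_eq_rpow_re_of_pos hx]
    simp
  have hint := key_integrable hc hcont_h hB
  refine ⟨hint, ?_⟩
  have hmc : MellinConvergent f c := mellinConv hc
  have hvert : Complex.VerticalIntegrable (mellin f) c := by
    refine (key_integrable hc (h := fun _ => (1 : ℂ)) continuous_const (B := 1)
      (fun t => by simp)).congr (Filter.Eventually.of_forall fun t => ?_)
    show Complex.Gamma _ * riemannZeta _ * 1 = mellin f ((c : ℂ) + (t : ℂ) * Complex.I)
    rw [mul_one, ← mellin_f (hline t)]
  have hinv := mellinInv_mellin_eq c f hx hmc hvert (continuousAt_f hx)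
  rw [mellinInv] at hinv
  calc (1 / (2 * (Real.pi : ℂ))) *
        ∫ t : ℝ, Complex.Gamma ((c : ℂ) + (t : ℂ) * Complex.I) *
          riemannZeta ((c : ℂ) + (t : ℂ) * Complex.I) *
          (x : ℂ) ^ (-((c : ℂ) + (t : ℂ) * Complex.I))
      = (1 / (2 * Real.pi) : ℝ) •
          ∫ y : ℝ, (x : ℂ) ^ (-((c : ℂ) + (y : ℂ) * Complex.I)) •
            mellin f ((c : ℂ) + (y : ℂ) * Complex.I) := by
        rw [Complex.real_smul]
        push_cast
        congr 1
        refine integral_congr_ae (Filter.Eventually.of_forall fun t => ?_)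
        show Complex.Gamma _ * riemannZeta _ * (x : ℂ) ^ (-((c : ℂ) + (t : ℂ) * Complex.I)) =
          (x : ℂ) ^ (-((c : ℂ) + (t : ℂ) * Complex.I)) • mellin f ((c : ℂ) + (t : ℂ) * Complex.I)
        rw [smul_eq_mul, mellin_f (hline t), mul_comm]
    _ = f x := hinv
    _ = 1 / ((Real.exp x : ℂ) - 1) := rfl
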